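/- For a monoid S the following are equivalent: (i) every InD-injective right S-act is injective; (ii) every InD-injective right S-act is quasi injective; (iii) S is left reversible. -/

import Mathlib

universe u

/-- A right `S`-act structure on a nonempty type `A`: a right action of the monoid `S`. -/
class RightAct (S : Type u) [Monoid S] (A : Type u) : Type u where
  act : A → S → A
  act_one : ∀ a : A, act a 1 = a
  act_mul : ∀ (a : A) (s t : S), act (act a s) t = act a (s * t)
  nonempty : Nonempty A

infixl:70 " ⊛ " => RightAct.act

/-- `S` is left reversible: every two right ideals (equiv. principal ones) intersect. -/
def LeftReversible (S : Type u) [Monoid S] : Prop :=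
  ∀ a b : S, ∃ u v : S, a * u = b * v

/-- A left zero element of the monoid `S`. -/
def IsLeftZero (S : Type u) [Monoid S] (z : S) : Prop :=
  ∀ s : S, z * s = z

/-- `f : A → B` is a homomorphism of right `S`-acts. -/
def IsActHom (S : Type u) [Monoid S] {A B : Type u} [RightAct S A] [RightAct S B]
    (f : A → B) : Prop :=
  ∀ (a : A) (s : S), f (a ⊛ s) = f a ⊛ s

/-- The restriction of `f : A → B` to the subset `C` is a homomorphism of right `S`-acts. -/
def IsActHomOn (S : Type u) [Monoid S] {A B : Type u} [RightAct S A] [RightAct S B]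
    (f : A → B) (C : Set A) : Prop :=
  ∀ a ∈ C, ∀ s : S, f (a ⊛ s) = f a ⊛ s

/-- A subact: a nonempty subset closed under the action. -/
def IsSubact (S : Type u) [Monoid S] {A : Type u} [RightAct S A] (C : Set A) : Prop :=
  C.Nonempty ∧ ∀ a ∈ C, ∀ s : S, a ⊛ s ∈ C

/-- A zero element of an act: fixed by the action of every `s ∈ S`. -/
def IsZeroElem (S : Type u) [Monoid S] {A : Type u} [RightAct S A] (θ : A) : Prop :=
  ∀ s : S, θ ⊛ s = θ

/-- A subset `D` (viewed as an act) is decomposable: it is the disjoint union of two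
nonempty subacts. -/
def DecomposableSet (S : Type u) [Monoid S] {A : Type u} [RightAct S A] (D : Set A) : Prop :=
  ∃ B C : Set A, IsSubact S B ∧ IsSubact S C ∧ B ∪ C = D ∧ B ∩ C = ∅

/-- A subset (viewed as an act) is indecomposable. -/
def IndecomposableSet (S : Type u) [Monoid S] {A : Type u} [RightAct S A] (D : Set A) : Prop :=
  ¬ DecomposableSet S D

/-- The act `A` is decomposable. -/
def Decomposable (S : Type u) [Monoid S] (A : Type u) [RightAct S A] : Prop :=
  DecomposableSet S (Set.univ : Set A)

/-- The act `A` is indecomposable. -/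
def Indecomposable (S : Type u) [Monoid S] (A : Type u) [RightAct S A] : Prop :=
  ¬ Decomposable S A

/-- A cyclic act: generated by a single element. -/
def CyclicAct (S : Type u) [Monoid S] (A : Type u) [RightAct S A] : Prop :=
  ∃ a : A, ∀ x : A, ∃ s : S, x = a ⊛ s

/-- `A` is a retract of `B`. -/
def IsRetractOf (S : Type u) [Monoid S] (A B : Type u) [RightAct S A] [RightAct S B] : Prop :=
  ∃ (i : A → B) (p : B → A), IsActHom S i ∧ IsActHom S p ∧ ∀ a : A, p (i a) = a

/-- `Q` is an injective act: every homomorphism from a subact `C` of any act `B` into `Q`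
extends to `B`. -/
def ActInjective (S : Type u) [Monoid S] (Q : Type u) [RightAct S Q] : Prop :=
  ∀ (B : Type u) [RightAct S B], ∀ C : Set B, IsSubact S C →
    ∀ f : B → Q, IsActHomOn S f C →
      ∃ g : B → Q, IsActHom S g ∧ Set.EqOn g f C

/-- `Q` is InC-injective: injective relative to all embeddings into indecomposable acts. -/
def InCInjective (S : Type u) [Monoid S] (Q : Type u) [RightAct S Q] : Prop :=
  ∀ (B : Type u) [RightAct S B], Indecomposable S B → ∀ C : Set B, IsSubact S C →
    ∀ f : B → Q, IsActHomOn S f C →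
      ∃ g : B → Q, IsActHom S g ∧ Set.EqOn g f C

/-- `Q` is InD-injective: injective relative to all embeddings of indecomposable acts. -/
def InDInjective (S : Type u) [Monoid S] (Q : Type u) [RightAct S Q] : Prop :=
  ∀ (B : Type u) [RightAct S B], ∀ C : Set B, IsSubact S C → IndecomposableSet S C →
    ∀ f : B → Q, IsActHomOn S f C →
      ∃ g : B → Q, IsActHom S g ∧ Set.EqOn g f C

/-- `Q` is PInD-injective: every monomorphism from an indecomposable subact extends. -/
def PInDInjective (S : Type u) [Monoid S] (Q : Type u) [RightAct S Q] : Prop :=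
  ∀ (B : Type u) [RightAct S B], ∀ C : Set B, IsSubact S C → IndecomposableSet S C →
    ∀ f : B → Q, IsActHomOn S f C → Set.InjOn f C →
      ∃ g : B → Q, IsActHom S g ∧ Set.EqOn g f C

/-- `A` is quasi injective: homomorphisms from subacts of `A` to `A` extend to `A`. -/
def QuasiInjective (S : Type u) [Monoid S] (A : Type u) [RightAct S A] : Prop :=
  ∀ C : Set A, IsSubact S C → ∀ f : A → A, IsActHomOn S f C →
    ∃ g : A → A, IsActHom S g ∧ Set.EqOn g f C

/-- `A` is pseudo injective: monomorphisms from subacts of any act into `A` extend. -/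
def PseudoInjective (S : Type u) [Monoid S] (A : Type u) [RightAct S A] : Prop :=
  ∀ (C : Type u) [RightAct S C], ∀ B : Set C, IsSubact S B →
    ∀ f : C → A, IsActHomOn S f B → Set.InjOn f B →
      ∃ g : C → A, IsActHom S g ∧ Set.EqOn g f B

/-- A subact `Q` of `A` (viewed as an act in its own right) is injective. -/
def ActInjectiveSet (S : Type u) [Monoid S] {A : Type u} [RightAct S A] (Q : Set A) : Prop :=
  ∀ (B : Type u) [RightAct S B], ∀ C : Set B, IsSubact S C →
    ∀ f : B → A, IsActHomOn S f C → (∀ c ∈ C, f c ∈ Q) →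
      ∃ g : B → A, IsActHom S g ∧ (∀ b : B, g b ∈ Q) ∧ Set.EqOn g f C

/-- A subact `Q` of `A` (viewed as an act in its own right) is InD-injective. -/
def InDInjectiveSet (S : Type u) [Monoid S] {A : Type u} [RightAct S A] (Q : Set A) : Prop :=
  ∀ (B : Type u) [RightAct S B], ∀ C : Set B, IsSubact S C → IndecomposableSet S C →
    ∀ f : B → A, IsActHomOn S f C → (∀ c ∈ C, f c ∈ Q) →
      ∃ g : B → A, IsActHom S g ∧ (∀ b : B, g b ∈ Q) ∧ Set.EqOn g f C

/-- A subact `Q` of `A` (viewed as an act in its own right) is PInD-injective. -/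
def PInDInjectiveSet (S : Type u) [Monoid S] {A : Type u} [RightAct S A] (Q : Set A) : Prop :=
  ∀ (B : Type u) [RightAct S B], ∀ C : Set B, IsSubact S C → IndecomposableSet S C →
    ∀ f : B → A, IsActHomOn S f C → Set.InjOn f C → (∀ c ∈ C, f c ∈ Q) →
      ∃ g : B → A, IsActHom S g ∧ (∀ b : B, g b ∈ Q) ∧ Set.EqOn g f C

/-- The monoid `S` as a right act over itself, by multiplication. -/
instance selfAct (S : Type u) [Monoid S] : RightAct S S where
  act a s := a * s
  act_one := mul_one
  act_mul a s t := mul_assoc a s t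
  nonempty := ⟨1⟩

/-- `Q` is weakly injective: homomorphisms from right ideals of `S` into `Q` extend to `S`. -/
def WeaklyInjective (S : Type u) [Monoid S] (Q : Type u) [RightAct S Q] : Prop :=
  ∀ I : Set S, IsSubact S I → ∀ f : S → Q, IsActHomOn S f I →
    ∃ g : S → Q, IsActHom S g ∧ Set.EqOn g f I

/-- The relation whose equivalence closure has the indecomposable components as classes. -/
def ActRel (S : Type u) [Monoid S] {A : Type u} [RightAct S A] (a b : A) : Prop :=
  ∃ s : S, b = a ⊛ s

/-- The indecomposable component of the element `a` of an act. -/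
def ActComponent (S : Type u) [Monoid S] {A : Type u} [RightAct S A] (a : A) : Set A :=
  {b | Relation.EqvGen (ActRel S) a b}

/-- Cofree act structure on `S → S`. -/
instance cofreeAct (S : Type u) [Monoid S] : RightAct S (S → S) where
  act q s := fun t => q (s * t)
  act_one q := by funext t; simp
  act_mul q s t := by funext r; show q (s * (t * r)) = q (s * t * r); rw [mul_assoc]
  nonempty := ⟨fun _ => 1⟩

/-- Coproduct act structure on a sum type. -/
instance sumAct (S A B : Type u) [Monoid S] [RightAct S A] [RightAct S B] :
    RightAct S (A ⊕ B) where
  act x s := Sum.map (· ⊛ s) (· ⊛ s) x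
  act_one x := by cases x <;> simp [Sum.map, RightAct.act_one]
  act_mul x s t := by cases x <;> simp [Sum.map, RightAct.act_mul]
  nonempty := ⟨Sum.inl (Classical.choice (RightAct.nonempty S))⟩

theorem sum_act_inl {S A B : Type u} [Monoid S] [RightAct S A] [RightAct S B]
    (x : A) (s : S) : (Sum.inl x : A ⊕ B) ⊛ s = Sum.inl (x ⊛ s) := rfl

theorem sum_act_inr {S A B : Type u} [Monoid S] [RightAct S A] [RightAct S B]
    (x : B) (s : S) : (Sum.inr x : A ⊕ B) ⊛ s = Sum.inr (x ⊛ s) := rfl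

/-- The cofree act `S → S` is injective. -/
theorem cofree_injective (S : Type u) [Monoid S] : ActInjective S (S → S) := by
  classical
  intro B _ C hC f hf
  refine ⟨fun b t => if h : b ⊛ t ∈ C then f (b ⊛ t) 1 else 1, ?_, ?_⟩
  · intro b s
    funext t
    show (if h : (b ⊛ s) ⊛ t ∈ C then f ((b ⊛ s) ⊛ t) 1 else 1)
      = (if h : b ⊛ (s * t) ∈ C then f (b ⊛ (s * t)) 1 else 1)
    rw [RightAct.act_mul]
  · intro c hc
    funext t
    have hct : c ⊛ t ∈ C := hC.2 c hc t
    show (if h : c ⊛ t ∈ C then f (c ⊛ t) 1 else 1) = f c t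
    rw [dif_pos hct, hf c hc t]
    show f c (t * 1) = f c t
    rw [mul_one]

theorem eqvGen_to_common {S : Type u} [Monoid S] (hS : LeftReversible S)
    {A : Type u} [RightAct S A] {x y : A}
    (h : Relation.EqvGen (ActRel S) x y) : ∃ u v : S, x ⊛ u = y ⊛ v := by
  induction h with
  | rel x y h => obtain ⟨s, rfl⟩ := h; exact ⟨s, 1, (RightAct.act_one _).symm⟩
  | refl x => exact ⟨1, 1, rfl⟩
  | symm x y _ ih => obtain ⟨u, v, huv⟩ := ih; exact ⟨v, u, huv.symm⟩
  | trans x y z _ _ ih1 ih2 =>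
      obtain ⟨u, v, h1⟩ := ih1
      obtain ⟨w, t, h2⟩ := ih2
      obtain ⟨p, q, hpq⟩ := hS v w
      refine ⟨u * p, t * q, ?_⟩
      rw [← RightAct.act_mul, h1, RightAct.act_mul, hpq, ← RightAct.act_mul, h2,
        RightAct.act_mul]

theorem indec_of_pairwise {S : Type u} [Monoid S] {A : Type u} [RightAct S A] {D : Set A}
    (h : ∀ x ∈ D, ∀ y ∈ D, ∃ u v : S, x ⊛ u = y ⊛ v) : IndecomposableSet S D := by
  rintro ⟨B1, B2, ⟨⟨x, hx⟩, hB1⟩, ⟨⟨y, hy⟩, hB2⟩, hun, hint⟩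
  have hxD : x ∈ D := hun ▸ (Or.inl hx : x ∈ B1 ∪ B2)
  have hyD : y ∈ D := hun ▸ (Or.inr hy : y ∈ B1 ∪ B2)
  obtain ⟨u, v, huv⟩ := h x hxD y hyD
  have h1 : x ⊛ u ∈ B1 := hB1 x hx u
  have h2 : x ⊛ u ∈ B2 := huv ▸ hB2 y hy v
  have : x ⊛ u ∈ B1 ∩ B2 := ⟨h1, h2⟩
  rw [hint] at this
  exact this

theorem actComponent_act {S : Type u} [Monoid S] {A : Type u} [RightAct S A]
    (x : A) (s : S) : ActComponent S (x ⊛ s) = ActComponent S x := by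
  ext y
  constructor
  · intro hy
    exact Relation.EqvGen.trans _ _ _ (Relation.EqvGen.rel _ _ ⟨s, rfl⟩) hy
  · intro hy
    exact Relation.EqvGen.trans _ _ _
      (Relation.EqvGen.symm _ _ (Relation.EqvGen.rel _ _ ⟨s, rfl⟩)) hy
/-- TFAE: (i) all InD-injective acts are injective; (ii) all InD-injective
acts are quasi injective; (iii) `S` is left reversible. -/
theorem inDInjective_injective_tfae (S : Type u) [Monoid S] :
    List.TFAE [
      ∀ (Q : Type u) [RightAct S Q], InDInjective S Q → ActInjective S Q,
      ∀ (Q : Type u) [RightAct S Q], InDInjective S Q → QuasiInjective S Q,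
      LeftReversible S ] := by
  tfae_have 1 → 2 := by
    intro h1 Q _ hQ
    intro C hC f hf
    exact h1 Q hQ Q C hC f hf
  tfae_have 2 → 3 := by
    intro h2
    by_contra hrev
    simp only [LeftReversible, not_forall] at hrev
    obtain ⟨a, b, hab⟩ := hrev
    classical
    set F : Type u := S → S with hF
    set p : F := fun u => u with hp
    set A₁ : Set F := {x | ∃ s : S, x = p ⊛ (a * s)} with hA₁
    set A₂ : Set F := {x | ∃ s : S, x = p ⊛ (b * s)} with hA₂
    have pinj : ∀ s t : S, (p ⊛ s : F) = p ⊛ t → s = t := by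
      intro s t h
      have := congrFun h 1
      show s = t
      calc s = s * 1 := (mul_one s).symm
        _ = t * 1 := this
        _ = t := mul_one t
    have hdisj : ∀ x, x ∈ A₁ → x ∈ A₂ → False := by
      rintro x ⟨s, rfl⟩ ⟨t, hx⟩
      exact hab ⟨s, t, pinj _ _ hx⟩
    -- the InD-injective act
    set FF : Type u := F ⊕ F with hFF
    have hFFInD : InDInjective S FF := by
      intro B _ C hC hInd f hf
      set f' : B → F := fun b => Sum.elim id id (f b) with hf'def
      have hf' : IsActHomOn S f' C := by
        intro c hc s
        have hcs := hf c hc s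
        show Sum.elim id id (f (c ⊛ s)) = Sum.elim id id (f c) ⊛ s
        rw [hcs]
        cases hfc : f c with
        | inl x => rw [sum_act_inl]; rfl
        | inr x => rw [sum_act_inr]; rfl
      obtain ⟨g', hg', hge⟩ := cofree_injective S B C hC f' hf'
      have dich : (∀ c ∈ C, ∃ x, f c = Sum.inl x) ∨ (∀ c ∈ C, ∃ x, f c = Sum.inr x) := by
        by_contra hcon
        push_neg at hcon
        obtain ⟨⟨c₁, hc₁, h₁⟩, ⟨c₂, hc₂, h₂⟩⟩ := hcon
        apply hInd
        refine ⟨{c ∈ C | ∃ x, f c = Sum.inl x}, {c ∈ C | ∃ x, f c = Sum.inr x},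
          ⟨⟨c₂, hc₂, ?_⟩, ?_⟩, ⟨⟨c₁, hc₁, ?_⟩, ?_⟩, ?_, ?_⟩
        · cases hfc : f c₂ with
          | inl x => exact ⟨x, rfl⟩
          | inr x => exact absurd hfc (h₂ x)
        · rintro x ⟨hxC, y, hy⟩ s
          refine ⟨hC.2 x hxC s, y ⊛ s, ?_⟩
          rw [hf x hxC s, hy, sum_act_inl]
        · cases hfc : f c₁ with
          | inl x => exact absurd hfc (h₁ x)
          | inr x => exact ⟨x, rfl⟩
        · rintro x ⟨hxC, y, hy⟩ s
          refine ⟨hC.2 x hxC s, y ⊛ s, ?_⟩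
          rw [hf x hxC s, hy, sum_act_inr]
        · ext x
          constructor
          · rintro (⟨hx, _⟩ | ⟨hx, _⟩) <;> exact hx
          · intro hx
            cases hfc : f x with
            | inl y => exact Or.inl ⟨hx, y, hfc⟩
            | inr y => exact Or.inr ⟨hx, y, hfc⟩
        · ext x
          simp only [Set.mem_inter_iff, Set.mem_setOf_eq, Set.mem_empty_iff_false, iff_false]
          rintro ⟨⟨_, y, hy⟩, ⟨_, z, hz⟩⟩
          rw [hy] at hz
          cases hz
      rcases dich with hall | hall
      · refine ⟨fun b => Sum.inl (g' b), ?_, ?_⟩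
        · intro x s
          show Sum.inl (g' (x ⊛ s)) = (Sum.inl (g' x) : FF) ⊛ s
          rw [hg' x s, sum_act_inl]
        · intro c hc
          obtain ⟨x, hx⟩ := hall c hc
          show Sum.inl (g' c) = f c
          rw [hge hc]
          show Sum.inl (Sum.elim id id (f c)) = f c
          simp [hx]
      · refine ⟨fun b => Sum.inr (g' b), ?_, ?_⟩
        · intro x s
          show Sum.inr (g' (x ⊛ s)) = (Sum.inr (g' x) : FF) ⊛ s
          rw [hg' x s, sum_act_inr]
        · intro c hc
          obtain ⟨x, hx⟩ := hall c hc
          show Sum.inr (g' c) = f c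
          rw [hge hc]
          show Sum.inr (Sum.elim id id (f c)) = f c
          simp [hx]
    -- the subact and the non-extendable homomorphism
    set C : Set FF := Sum.inl '' (A₁ ∪ A₂) with hCdef
    have hCsub : IsSubact S C := by
      constructor
      · exact ⟨Sum.inl (p ⊛ (a * 1)), ⟨p ⊛ (a * 1), Or.inl ⟨1, rfl⟩, rfl⟩⟩
      · rintro x ⟨y, hy | hy, rfl⟩ s
        · obtain ⟨t, rfl⟩ := hy
          exact ⟨(p ⊛ (a * t)) ⊛ s, Or.inl ⟨t * s, by rw [RightAct.act_mul, mul_assoc]⟩,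
            (sum_act_inl _ _).symm⟩
        · obtain ⟨t, rfl⟩ := hy
          exact ⟨(p ⊛ (b * t)) ⊛ s, Or.inr ⟨t * s, by rw [RightAct.act_mul, mul_assoc]⟩,
            (sum_act_inl _ _).symm⟩
    set f : FF → FF := fun q => Sum.elim (fun x => if x ∈ A₂ then Sum.inr x else Sum.inl x)
      (fun x => Sum.inr x) q with hfdef
    have hA₁act : ∀ x ∈ A₁, ∀ s : S, x ⊛ s ∈ A₁ := by
      rintro x ⟨t, rfl⟩ s
      exact ⟨t * s, by rw [RightAct.act_mul, mul_assoc]⟩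
    have hA₂act : ∀ x ∈ A₂, ∀ s : S, x ⊛ s ∈ A₂ := by
      rintro x ⟨t, rfl⟩ s
      exact ⟨t * s, by rw [RightAct.act_mul, mul_assoc]⟩
    have hfC : IsActHomOn S f C := by
      rintro c ⟨y, hy | hy, rfl⟩ s
      · have h1 : y ∉ A₂ := fun h => hdisj y hy h
        have h2 : y ⊛ s ∉ A₂ := fun h => hdisj _ (hA₁act y hy s) h
        rw [sum_act_inl]
        show (if y ⊛ s ∈ A₂ then Sum.inr (y ⊛ s) else Sum.inl (y ⊛ s))
          = (if y ∈ A₂ then Sum.inr y else Sum.inl y) ⊛ s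
        rw [if_neg h1, if_neg h2, sum_act_inl]
      · have h1 : y ∈ A₂ := hy
        have h2 : y ⊛ s ∈ A₂ := hA₂act y hy s
        rw [sum_act_inl]
        show (if y ⊛ s ∈ A₂ then Sum.inr (y ⊛ s) else Sum.inl (y ⊛ s))
          = (if y ∈ A₂ then Sum.inr y else Sum.inl y) ⊛ s
        rw [if_pos h1, if_pos h2, sum_act_inr]
    obtain ⟨g, hg, hge⟩ := h2 FF hFFInD C hCsub f hfC
    have hpaC : (Sum.inl (p ⊛ a) : FF) ∈ C :=
      ⟨p ⊛ a, Or.inl ⟨1, by rw [mul_one]⟩, rfl⟩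
    have hpbC : (Sum.inl (p ⊛ b) : FF) ∈ C :=
      ⟨p ⊛ b, Or.inr ⟨1, by rw [mul_one]⟩, rfl⟩
    have hpaA₂ : (p ⊛ a : F) ∉ A₂ := by
      intro h
      exact hdisj _ ⟨1, by rw [mul_one]⟩ h
    have hpbA₂ : (p ⊛ b : F) ∈ A₂ := ⟨1, by rw [mul_one]⟩
    have ha : g (Sum.inl (p ⊛ a)) = Sum.inl (p ⊛ a) := by
      rw [hge hpaC]
      show (if (p ⊛ a : F) ∈ A₂ then Sum.inr (p ⊛ a) else Sum.inl (p ⊛ a)) = _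
      rw [if_neg hpaA₂]
    have hb : g (Sum.inl (p ⊛ b)) = Sum.inr (p ⊛ b) := by
      rw [hge hpbC]
      show (if (p ⊛ b : F) ∈ A₂ then Sum.inr (p ⊛ b) else Sum.inl (p ⊛ b)) = _
      rw [if_pos hpbA₂]
    have hga : g (Sum.inl p) ⊛ a = Sum.inl (p ⊛ a) := by
      rw [← hg (Sum.inl p) a, sum_act_inl, ha]
    have hgb : g (Sum.inl p) ⊛ b = Sum.inr (p ⊛ b) := by
      rw [← hg (Sum.inl p) b, sum_act_inl, hb]
    cases hq : g (Sum.inl p) with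
    | inl x =>
        rw [hq, sum_act_inl] at hgb
        cases hgb
    | inr x =>
        rw [hq, sum_act_inr] at hga
        cases hga
  tfae_have 3 → 1 := by
    intro hS Q _ hQ B _ C hC f hf
    classical
    obtain ⟨c₀, hc₀⟩ := hC.1
    have key : ∀ D : Set B, ∃ g : B → Q, IsActHom S g ∧
        ∀ c ∈ C, ActComponent S c = D → g c = f c := by
      intro D
      by_cases hk : ∃ c ∈ C, ActComponent S c = D
      · set E : Set B := {x ∈ C | ActComponent S x = D} with hE
        have hEsub : IsSubact S E := by
          obtain ⟨c₁, hc₁, hcd⟩ := hk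
          refine ⟨⟨c₁, hc₁, hcd⟩, ?_⟩
          rintro x ⟨hxC, hxD⟩ s
          exact ⟨hC.2 x hxC s, by rw [actComponent_act, hxD]⟩
        have hEind : IndecomposableSet S E := by
          apply indec_of_pairwise
          rintro x ⟨hxC, hxD⟩ y ⟨hyC, hyD⟩
          have hxy : Relation.EqvGen (ActRel S) x y := by
            have : y ∈ ActComponent S x := by
              rw [hxD, ← hyD]
              exact Relation.EqvGen.refl y
            exact this
          exact eqvGen_to_common hS hxy
        have hfE : IsActHomOn S f E := fun x hx s => hf x hx.1 s
        obtain ⟨g, hg, hgE⟩ := hQ B E hEsub hEind f hfE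
        exact ⟨g, hg, fun c hcC hcD => hgE ⟨hcC, hcD⟩⟩
      · set E : Set B := {x | ∃ s : S, x = c₀ ⊛ s} with hE
        have hEC : E ⊆ C := by
          rintro x ⟨s, rfl⟩
          exact hC.2 c₀ hc₀ s
        have hEsub : IsSubact S E := by
          refine ⟨⟨c₀, 1, (RightAct.act_one c₀).symm⟩, ?_⟩
          rintro x ⟨t, rfl⟩ s
          exact ⟨t * s, (RightAct.act_mul c₀ t s)⟩
        have hEind : IndecomposableSet S E := by
          apply indec_of_pairwise
          rintro x ⟨s, rfl⟩ y ⟨t, rfl⟩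
          obtain ⟨u, v, huv⟩ := hS s t
          exact ⟨u, v, by rw [RightAct.act_mul, RightAct.act_mul, huv]⟩
        have hfE : IsActHomOn S f E := fun x hx s => hf x (hEC hx) s
        obtain ⟨g, hg, _⟩ := hQ B E hEsub hEind f hfE
        exact ⟨g, hg, fun c hcC hcD => absurd ⟨c, hcC, hcD⟩ hk⟩
    choose G hGhom hGeq using key
    refine ⟨fun b => G (ActComponent S b) b, ?_, ?_⟩
    · intro b s
      show G (ActComponent S (b ⊛ s)) (b ⊛ s) = G (ActComponent S b) b ⊛ s
      rw [actComponent_act]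
      exact hGhom (ActComponent S b) b s
    · intro c hc
      exact hGeq (ActComponent S c) c hc rfl
  tfae_finish
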